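/- Fix δ > 0, define w̃ : ℝ → ℝ by w̃(x) = 1/(W(x) + δ) − 3/(2 + 3δ), let m ≥ 1 be an integer, and let f : ℤ → ℝ. Define, for real x ∈ (0, m) that is not an integer, L(x) = (Σ_{i=0}^{m} f(i)/w̃(x − i)) / (Σ_{i=0}^{m} 1/w̃(x − i)). Then for every integer j with 0 < j < m, L(x) tends to f(j) as x tends to j through non-integer values; that is, the moving least-squares method with the weight 1/w̃, which is infinite at the data points, is interpolatory. -/

import Mathlib

/-- The piecewise-cubic weight function. -/
noncomputable def W (x : ℝ) : ℝ :=
  if x < -2 then 0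
  else if x < -1 then (1/6) * (x + 2)^3
  else if x < 0 then -(1/2) * x^3 - x^2 + 2/3
  else if x < 1 then (1/2) * x^3 - x^2 + 2/3
  else if x < 2 then -(1/6) * (x - 2)^3
  else 0

lemma W_nonneg (x : ℝ) : 0 ≤ W x := by
  unfold W; split_ifs <;> nlinarith [sq_nonneg x, sq_nonneg (x+1), sq_nonneg (x-1), sq_nonneg (x+2), sq_nonneg (x-2)]

lemma W_lt (x : ℝ) (hx : x ≠ 0) : W x < 2/3 := by
  unfold W
  split_ifs with h1 h2 h3 h4 h5
  · norm_num
  · nlinarith [sq_nonneg (x+2), sq_nonneg (x+1)]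
  · have hx0 : x < 0 := h3
    nlinarith [mul_pos (mul_pos (neg_pos.2 hx0) (neg_pos.2 hx0)) (by linarith : (0:ℝ) < x/2 + 1)]
  · have hx0 : 0 < x := lt_of_le_of_ne (not_lt.1 h3) (Ne.symm hx)
    nlinarith [mul_pos (mul_pos hx0 hx0) (by linarith : (0:ℝ) < 1 - x/2)]
  · nlinarith [sq_nonneg (x-2), sq_nonneg (x-1)]
  · norm_num

lemma W_zero : W 0 = 2/3 := by unfold W; norm_num

lemma W_eq (x : ℝ) : W x =
    if -2 ≤ x then
      (if -1 ≤ x then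
        (if 0 ≤ x then
          (if 1 ≤ x then
            (if 2 ≤ x then 0 else -(1/6) * (x - 2)^3)
          else (1/2) * x^3 - x^2 + 2/3)
        else -(1/2) * x^3 - x^2 + 2/3)
      else (1/6) * (x + 2)^3)
    else 0 := by
  unfold W; split_ifs <;> first | rfl | linarith

lemma W_cont : Continuous W := by
  have c5 : Continuous fun x : ℝ => if 2 ≤ x then (0:ℝ) else -(1/6) * (x - 2)^3 := by
    apply Continuous.if_le continuous_const (by continuity) continuous_const continuous_id
    intro x hx; have hx2 : x = _ := (by simpa using hx.symm); subst hx2; norm_num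
  have c4 : Continuous fun x : ℝ =>
      if 1 ≤ x then (if 2 ≤ x then (0:ℝ) else -(1/6) * (x - 2)^3)
      else (1/2) * x^3 - x^2 + 2/3 := by
    apply Continuous.if_le c5 (by continuity) continuous_const continuous_id
    intro x hx; have hx2 : x = _ := (by simpa using hx.symm); subst hx2; norm_num
  have c3 : Continuous fun x : ℝ =>
      if 0 ≤ x then (if 1 ≤ x then (if 2 ≤ x then (0:ℝ) else -(1/6) * (x - 2)^3)
        else (1/2) * x^3 - x^2 + 2/3)
      else -(1/2) * x^3 - x^2 + 2/3 := by
    apply Continuous.if_le c4 (by continuity) continuous_const continuous_id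
    intro x hx; have hx2 : x = _ := (by simpa using hx.symm); subst hx2; norm_num
  have c2 : Continuous fun x : ℝ =>
      if -1 ≤ x then (if 0 ≤ x then (if 1 ≤ x then (if 2 ≤ x then (0:ℝ) else -(1/6) * (x - 2)^3)
        else (1/2) * x^3 - x^2 + 2/3) else -(1/2) * x^3 - x^2 + 2/3)
      else (1/6) * (x + 2)^3 := by
    apply Continuous.if_le c3 (by continuity) continuous_const continuous_id
    intro x hx; have hx2 : x = _ := (by simpa using hx.symm); subst hx2; norm_num
  have c1 : Continuous fun x : ℝ =>
      if -2 ≤ x then (if -1 ≤ x then (if 0 ≤ x then (if 1 ≤ x then (if 2 ≤ x then (0:ℝ) else -(1/6) * (x - 2)^3)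
        else (1/2) * x^3 - x^2 + 2/3) else -(1/2) * x^3 - x^2 + 2/3) else (1/6) * (x + 2)^3)
      else 0 := by
    apply Continuous.if_le c2 continuous_const continuous_const continuous_id
    intro x hx; have hx2 : x = _ := (by simpa using hx.symm); subst hx2; norm_num
  have : W = fun x : ℝ =>
      if -2 ≤ x then (if -1 ≤ x then (if 0 ≤ x then (if 1 ≤ x then (if 2 ≤ x then (0:ℝ) else -(1/6) * (x - 2)^3)
        else (1/2) * x^3 - x^2 + 2/3) else -(1/2) * x^3 - x^2 + 2/3) else (1/6) * (x + 2)^3)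
      else 0 := funext W_eq
  rw [this]; exact c1

open Filter Topology

/-- Interpolation property of the moving least-squares method with the weight
`1/w̃`, which is infinite at the data points: for every interior data point
`j`, the approximation
`L x = (∑_{i=0}^{m} f i / w̃ (x − i)) / (∑_{i=0}^{m} 1 / w̃ (x − i))`
tends to `f j` as `x → j` through non-integer values of `(0, m)`. -/
theorem mls_interpolation (δ : ℝ) (hδ : 0 < δ)
    (wt : ℝ → ℝ) (hwt : wt = fun x => 1 / (W x + δ) - 3 / (2 + 3 * δ))
    (m : ℕ) (hm : 1 ≤ m) (f : ℤ → ℝ)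
    (L : ℝ → ℝ)
    (hL : L = fun x =>
      (∑ i ∈ Finset.range (m + 1), f i / wt (x - i)) /
        (∑ i ∈ Finset.range (m + 1), 1 / wt (x - i)))
    (j : ℤ) (hj0 : 0 < j) (hjm : j < m) :
    Tendsto L
      (𝓝[{x : ℝ | x ∈ Set.Ioo (0 : ℝ) (m : ℝ) ∧ ∀ k : ℤ, x ≠ (k : ℝ)}] (j : ℝ))
      (𝓝 (f j)) := by
  set S : Set ℝ := {x : ℝ | x ∈ Set.Ioo (0 : ℝ) (m : ℝ) ∧ ∀ k : ℤ, x ≠ (k : ℝ)} with hSdef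
  set F := 𝓝[S] (j : ℝ) with hFdef
  -- basic facts about wt
  have hden : ∀ y : ℝ, 0 < W y + δ := fun y => by have := W_nonneg y; linarith
  have hwtpos : ∀ y : ℝ, y ≠ 0 → 0 < wt y := by
    intro y hy
    rw [hwt]
    have h1 := W_lt y hy
    have h2 := hden y
    simp only [sub_pos]
    rw [div_lt_div_iff₀ (by linarith) h2]
    linarith
  have hwt0 : wt 0 = 0 := by
    rw [hwt]; simp only [W_zero]
    rw [sub_eq_zero, div_eq_div_iff (by linarith) (by linarith)]
    ring
  have hwtc : Continuous wt := by
    rw [hwt]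
    exact (continuous_const.div (W_cont.add continuous_const)
      (fun y => (hden y).ne')).sub continuous_const
  -- membership facts
  have hmemS : ∀ᶠ x in F, x ∈ S := eventually_mem_nhdsWithin
  have hxne : ∀ x ∈ S, ∀ k : ℤ, x - (k : ℝ) ≠ 0 := by
    intro x hx k
    have := hx.2 k
    intro h; apply this; linarith [sub_eq_zero.1 h]
  -- index n
  set n : ℕ := j.toNat with hndef
  have hnj : (n : ℤ) = j := Int.toNat_of_nonneg hj0.le
  have hnjR : (n : ℝ) = (j : ℝ) := by exact_mod_cast congrArg (fun k : ℤ => (k : ℝ)) hnj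
  have hnmem : n ∈ Finset.range (m + 1) := by
    refine Finset.mem_range.2 ?_
    have : (n : ℤ) < (m : ℤ) := hnj ▸ hjm
    omega
  have hfn : f (n : ℤ) = f j := congrArg f hnj
  -- limit of wt (x - j)
  have h0 : Tendsto (fun x : ℝ => wt (x - (j : ℝ))) F (𝓝 0) := by
    have : Tendsto (fun x : ℝ => wt (x - (j : ℝ))) (𝓝 (j : ℝ)) (𝓝 (wt ((j : ℝ) - (j : ℝ)))) :=
      (hwtc.comp (continuous_sub_right _)).tendsto _
    simpa [hwt0] using this.mono_left nhdsWithin_le_nhds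
  -- per-index ratio limits
  have hratio : ∀ i ∈ Finset.range (m + 1),
      Tendsto (fun x : ℝ => wt (x - (j : ℝ)) / wt (x - (i : ℕ)))
        F (𝓝 (if i = n then 1 else 0)) := by
    intro i _
    by_cases hi : i = n
    · subst hi
      simp only [if_pos rfl]
      have hev : ∀ᶠ x in F, wt (x - (j : ℝ)) / wt (x - ((n : ℕ) : ℝ)) = 1 := by
        filter_upwards [hmemS] with x hx
        rw [hnjR, div_self ((hwtpos _ (hxne x hx j)).ne')]
      exact Tendsto.congr' (hev.mono fun x h => h.symm) tendsto_const_nhds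
    · simp only [if_neg hi]
      have hne : ((j : ℝ) - (i : ℕ)) ≠ 0 := by
        rw [← hnjR]
        intro h
        exact hi (by exact_mod_cast (sub_eq_zero.1 h).symm)
      have hdi : Tendsto (fun x : ℝ => wt (x - (i : ℕ))) F (𝓝 (wt ((j : ℝ) - (i : ℕ)))) :=
        ((hwtc.comp (continuous_sub_right _)).tendsto _).mono_left nhdsWithin_le_nhds
      have := h0.div hdi (hwtpos _ hne).ne'
      rw [zero_div] at this; exact this
  -- numerator and denominator limits
  have hnum : Tendsto (fun x : ℝ => ∑ i ∈ Finset.range (m + 1),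
      f (i : ℤ) * (wt (x - (j : ℝ)) / wt (x - (i : ℕ)))) F (𝓝 (f j)) := by
    have hsum : Tendsto (fun x : ℝ => ∑ i ∈ Finset.range (m + 1),
        f (i : ℤ) * (wt (x - (j : ℝ)) / wt (x - (i : ℕ)))) F
        (𝓝 (∑ i ∈ Finset.range (m + 1), f (i : ℤ) * (if i = n then 1 else 0))) := by
      apply tendsto_finset_sum
      intro i hi
      exact (hratio i hi).const_mul _
    have : (∑ i ∈ Finset.range (m + 1), f (i : ℤ) * (if i = n then 1 else 0)) = f j := by
      rw [Finset.sum_eq_single n]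
      · simp [hfn]
      · intro b _ hb; simp [hb]
      · intro h; exact absurd hnmem h
    rwa [this] at hsum
  have hden2 : Tendsto (fun x : ℝ => ∑ i ∈ Finset.range (m + 1),
      (wt (x - (j : ℝ)) / wt (x - (i : ℕ)))) F (𝓝 1) := by
    have hsum : Tendsto (fun x : ℝ => ∑ i ∈ Finset.range (m + 1),
        (wt (x - (j : ℝ)) / wt (x - (i : ℕ)))) F
        (𝓝 (∑ i ∈ Finset.range (m + 1), (if i = n then (1:ℝ) else 0))) :=
      tendsto_finset_sum _ (fun i hi => hratio i hi)
    have : (∑ i ∈ Finset.range (m + 1), (if i = n then (1:ℝ) else 0)) = 1 := by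
      rw [Finset.sum_eq_single n] <;> simp_all
    rwa [this] at hsum
  -- combine
  have hG : Tendsto (fun x : ℝ =>
      (∑ i ∈ Finset.range (m + 1), f (i : ℤ) * (wt (x - (j : ℝ)) / wt (x - (i : ℕ)))) /
      (∑ i ∈ Finset.range (m + 1), (wt (x - (j : ℝ)) / wt (x - (i : ℕ))))) F (𝓝 (f j)) := by
    have := hnum.div hden2 one_ne_zero
    rw [div_one] at this; exact this
  apply Tendsto.congr' _ hG
  filter_upwards [hmemS] with x hx
  have hw : wt (x - (j : ℝ)) ≠ 0 := (hwtpos _ (hxne x hx j)).ne'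
  rw [hL]
  simp only
  have e1 : ∀ i : ℕ, f (i : ℤ) * (wt (x - (j : ℝ)) / wt (x - (i : ℕ)))
      = (f (i : ℤ) / wt (x - (i : ℕ))) * wt (x - (j : ℝ)) := by
    intro i; rw [div_mul_eq_mul_div, mul_div_assoc]
  have e2 : ∀ i : ℕ, (wt (x - (j : ℝ)) / wt (x - (i : ℕ)))
      = (1 / wt (x - (i : ℕ))) * wt (x - (j : ℝ)) := by
    intro i; rw [div_mul_eq_mul_div, one_mul]
  have eN : (∑ i ∈ Finset.range (m+1), f (i:ℤ) * (wt (x - (j:ℝ)) / wt (x - (i:ℕ))))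
      = (∑ i ∈ Finset.range (m+1), f (i:ℤ) / wt (x - (i:ℕ))) * wt (x - (j:ℝ)) := by
    rw [Finset.sum_mul]; exact Finset.sum_congr rfl fun i _ => e1 i
  have eD : (∑ i ∈ Finset.range (m+1), (wt (x - (j:ℝ)) / wt (x - (i:ℕ))))
      = (∑ i ∈ Finset.range (m+1), 1 / wt (x - (i:ℕ))) * wt (x - (j:ℝ)) := by
    rw [Finset.sum_mul]; exact Finset.sum_congr rfl fun i _ => e2 i
  rw [eN, eD, mul_div_mul_right _ _ hw]
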